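/- Let p be a prime number and let a and k be positive integers. The function j \mapsto \binom{j}{k} mod p^a, defined for j \geq k, is periodic, and its minimal period is exactly p^{a+e}, where e = \lfloor \log_p k \rfloor; that is, \binom{j+p^{a+e}}{k} \equiv \binom{j}{k} (mod p^a) for all j \geq k, and p^{a+e} is the least positive integer with this property. -/

import Mathlib

open Nat Finset

private lemma aux_dvd_choose (p m e i : ℕ) (hp : p.Prime) (hi : 0 < i) (hie : i < p ^ (e+1))
    (hem : e < m) : p ^ (m - e) ∣ Nat.choose (p ^ m) i := by
  have hpm : 0 < p ^ m := Nat.pow_pos hp.pos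
  have him : i ≤ p ^ m :=
    le_of_lt (lt_of_lt_of_le hie (Nat.pow_le_pow_right hp.pos hem))
  have hC : 0 < Nat.choose (p ^ m) i := Nat.choose_pos him
  have key : p ^ m * Nat.choose (p ^ m - 1) (i - 1) = Nat.choose (p ^ m) i * i := by
    have := Nat.add_one_mul_choose_eq (p ^ m - 1) (i - 1)
    rwa [Nat.sub_add_cancel hpm, Nat.sub_add_cancel hi] at this
  have hdvd : p ^ m ∣ Nat.choose (p ^ m) i * i := ⟨_, key.symm⟩
  have hne : Nat.choose (p ^ m) i * i ≠ 0 := by positivity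
  have hfac : m ≤ (Nat.choose (p ^ m) i * i).factorization p :=
    (hp.pow_dvd_iff_le_factorization hne).1 hdvd
  rw [Nat.factorization_mul hC.ne' hi.ne'] at hfac
  have hfi : i.factorization p ≤ e := by
    have h1 : p ^ i.factorization p ∣ i := Nat.ordProj_dvd i p
    have h2 : p ^ i.factorization p ≤ i := Nat.le_of_dvd hi h1
    have h3 : p ^ i.factorization p < p ^ (e+1) := lt_of_le_of_lt h2 hie
    exact Nat.lt_succ_iff.mp (Nat.pow_lt_pow_iff_right hp.one_lt |>.1 h3)
  refine (hp.pow_dvd_iff_le_factorization hC.ne').2 ?_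
  simp only [Finsupp.add_apply] at hfac
  omega

private lemma part1 (p a k : ℕ) (hp : p.Prime) (ha : 0 < a) (hk : 0 < k) :
    ∀ j : ℕ, Nat.choose (j + p ^ (a + Nat.log p k)) k ≡ Nat.choose j k [MOD p ^ a] := by
  intro j
  set e := Nat.log p k with he
  rw [add_comm j, Nat.add_choose_eq, Finset.Nat.sum_antidiagonal_eq_sum_range_succ_mk]
  rw [Finset.sum_range_succ']
  simp only [Nat.choose_zero_right, one_mul, Nat.sub_zero]
  have hdvd : p ^ a ∣ ∑ i ∈ Finset.range k,
      Nat.choose (p ^ (a + e)) (i + 1) * Nat.choose j (k - (i + 1)) := by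
    refine Finset.dvd_sum fun i hi => Dvd.dvd.mul_right ?_ _
    have h1 : i + 1 < p ^ (e + 1) :=
      lt_of_le_of_lt (Nat.succ_le_of_lt (Finset.mem_range.1 hi)) (Nat.lt_pow_succ_log_self hp.one_lt k)
    have := aux_dvd_choose p (a + e) e (i + 1) hp (Nat.succ_pos i) h1 (by omega)
    simpa [show a + e - e = a by omega] using this
  calc (∑ i ∈ Finset.range k, Nat.choose (p ^ (a + e)) (i + 1) * Nat.choose j (k - (i + 1)))
        + Nat.choose j k ≡ 0 + Nat.choose j k [MOD p ^ a] :=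
        Nat.ModEq.add_right _ ((Nat.modEq_zero_iff_dvd).2 hdvd)
  _ = Nat.choose j k := by omega


private lemma witnessD (p a k e : ℕ) (hp : p.Prime) (ha : 0 < a)
    (hpe : p ^ e ≤ k) (hk1 : k < p ^ (e+1)) :
    ∃ D : ℕ,
      ((Finset.Ico 1 (a+e+2)).filter
          (fun i => p ^ i ≤ k % p ^ i + D % p ^ i) ⊆ Finset.Ico (e+1) (a+e)) ∧
      (Finset.Ico (e+1) (a+e+1) ⊆ (Finset.Ico 1 (a+e+2)).filter
          (fun i => p ^ i ≤ k % p ^ i + (D + p ^ (a+e-1)) % p ^ i)) ∧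
      k + D + p ^ (a+e-1) < p ^ (a+e+1) := by
  have hp2 : 2 ≤ p := hp.two_le
  have hpepos : 0 < p ^ e := Nat.pow_pos hp.pos
  rcases le_or_gt 2 a with ha2 | halt
  · -- case a ≥ 2
    set P := p ^ (a+e-1) with hPdef
    have hEP : p ^ e ≤ P := Nat.pow_le_pow_right hp.pos (by omega)
    have hE1P : p ^ (e+1) ≤ P := Nat.pow_le_pow_right hp.pos (by omega)
    have hE1AE : p ^ (e+1) ≤ p ^ (a+e) := Nat.pow_le_pow_right hp.pos (by omega)
    have hPp : p * P = p ^ (a+e) := by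
      rw [hPdef, ← Nat.pow_succ']; congr 1; omega
    have hrel : (p - 1) * P + P = p ^ (a+e) := by
      have h1 : (p - 1) * P + P = (p - 1 + 1) * P := by ring
      rw [h1, show p - 1 + 1 = p by omega, hPp]
    have hP1 : p ^ e ≤ (p - 1) * P :=
      le_trans hEP (Nat.le_mul_of_pos_left _ (by omega))
    have h2p : 2 * p ^ (a+e) ≤ p ^ (a+e+1) := by
      calc 2 * p ^ (a+e) = p ^ (a+e) * 2 := by ring
      _ ≤ p ^ (a+e) * p := Nat.mul_le_mul_left _ hp2
      _ = p ^ (a+e+1) := by rw [← pow_succ]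
    refine ⟨(p - 1) * P - p ^ e, ?_, ?_, ?_⟩
    · intro i hi
      rw [Finset.mem_filter, Finset.mem_Ico] at hi
      obtain ⟨⟨hi1, hib⟩, hcar⟩ := hi
      have hkm : k % p ^ i < p ^ i := Nat.mod_lt _ (Nat.pow_pos hp.pos)
      rw [Finset.mem_Ico]
      constructor
      · by_contra h
        push_neg at h
        have hdvd : p ^ i ∣ (p - 1) * P - p ^ e := by
          refine dvd_trans (pow_dvd_pow p (show i ≤ e by omega)) ?_
          exact Nat.dvd_sub (Dvd.dvd.mul_left (pow_dvd_pow p (by omega)) _) dvd_rfl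
        have hz : ((p - 1) * P - p ^ e) % p ^ i = 0 := Nat.mod_eq_zero_of_dvd hdvd
        omega
      · by_contra h
        push_neg at h
        have h1 : k % p ^ i ≤ k := Nat.mod_le _ _
        have h2 : ((p - 1) * P - p ^ e) % p ^ i ≤ (p - 1) * P - p ^ e := Nat.mod_le _ _
        have h3 : p ^ (a+e) ≤ p ^ i := Nat.pow_le_pow_right hp.pos h
        omega
    · intro i hi
      rw [Finset.mem_Ico] at hi
      obtain ⟨hie, hia⟩ := hi
      rw [Finset.mem_filter, Finset.mem_Ico]
      refine ⟨⟨by omega, by omega⟩, ?_⟩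
      have hkmod : k % p ^ i = k :=
        Nat.mod_eq_of_lt (lt_of_lt_of_le hk1 (Nat.pow_le_pow_right hp.pos hie))
      have hip : p ^ i ≤ p ^ (a+e) := Nat.pow_le_pow_right hp.pos (by omega)
      have hei : p ^ e < p ^ i := Nat.pow_lt_pow_right hp.one_lt (by omega)
      obtain ⟨c, hc⟩ : p ^ i ∣ (p ^ (a+e) - p ^ i) :=
        Nat.dvd_sub (pow_dvd_pow p (by omega)) dvd_rfl
      have hDPeq : ((p - 1) * P - p ^ e) + P = (p ^ i - p ^ e) + p ^ i * c := by omega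
      have hmod : (((p - 1) * P - p ^ e) + P) % p ^ i = p ^ i - p ^ e := by
        rw [hDPeq, Nat.add_mul_mod_self_left, Nat.mod_eq_of_lt (by omega)]
      rw [hkmod, hmod]
      omega
    · omega
  · -- case a = 1
    have ha1 : a = 1 := by omega
    subst ha1
    have hP : p ^ (1+e-1) = p ^ e := by congr 1; omega
    rw [hP]
    obtain ⟨ke, r, hkeq, hr, hke1, hkep⟩ :
        ∃ ke r, k = ke * p ^ e + r ∧ r < p ^ e ∧ 1 ≤ ke ∧ ke < p := by
      refine ⟨k / p ^ e, k % p ^ e, ?_, Nat.mod_lt _ hpepos, (Nat.one_le_div_iff hpepos).2 hpe, ?_⟩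
      · have h := Nat.div_add_mod k (p ^ e)
        have h2 := Nat.mul_comm (p ^ e) (k / p ^ e)
        omega
      · have hx : k < p * p ^ e := by rw [← Nat.pow_succ']; exact hk1
        exact (Nat.div_lt_iff_lt_mul hpepos).2 hx
    have hpe1 : (p - 1) * p ^ e + p ^ e = p ^ (e+1) := by
      have h1 : (p - 1) * p ^ e + p ^ e = (p - 1 + 1) * p ^ e := by ring
      rw [h1, show p - 1 + 1 = p by omega, ← Nat.pow_succ']
    have hmul : (p - 1 - ke) * p ^ e + ke * p ^ e = (p - 1) * p ^ e := by
      rw [← Nat.add_mul]; congr 1; omega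
    have hmul2 : (p - 1 - ke) * p ^ e + p ^ e = (p - 1 - ke + 1) * p ^ e := by ring
    have hmul3 : (p - 1 - ke + 1) * p ^ e ≤ (p - 1) * p ^ e :=
      Nat.mul_le_mul_right _ (by omega)
    have h2 : 2 * p ^ (1+e) ≤ p ^ (1+e+1) := by
      calc 2 * p ^ (1+e) = p ^ (1+e) * 2 := by ring
      _ ≤ p ^ (1+e) * p := Nat.mul_le_mul_left _ hp2
      _ = p ^ (1+e+1) := by rw [← pow_succ]
    have h1e : p ^ (e+1) = p ^ (1+e) := by congr 1; omega
    refine ⟨(p - 1 - ke) * p ^ e, ?_, ?_, ?_⟩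
    · intro i hi
      exfalso
      rw [Finset.mem_filter, Finset.mem_Ico] at hi
      obtain ⟨⟨hi1, hib⟩, hcar⟩ := hi
      have hkm : k % p ^ i < p ^ i := Nat.mod_lt _ (Nat.pow_pos hp.pos)
      rcases le_or_gt i e with hie | hie
      · have hdvd : p ^ i ∣ (p - 1 - ke) * p ^ e :=
          dvd_trans (pow_dvd_pow p hie) (dvd_mul_left _ _)
        have hz : ((p - 1 - ke) * p ^ e) % p ^ i = 0 :=
          Nat.mod_eq_zero_of_dvd hdvd
        omega
      · have hb1 : k % p ^ i ≤ k := Nat.mod_le _ _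
        have hb2 : ((p - 1 - ke) * p ^ e) % p ^ i ≤ (p - 1 - ke) * p ^ e := Nat.mod_le _ _
        have hb3 : p ^ (e+1) ≤ p ^ i := Nat.pow_le_pow_right hp.pos hie
        omega
    · intro i hi
      rw [Finset.mem_Ico] at hi
      have hieq : i = e + 1 := by omega
      subst hieq
      rw [Finset.mem_filter, Finset.mem_Ico]
      refine ⟨⟨by omega, by omega⟩, ?_⟩
      have hkmod : k % p ^ (e+1) = k := Nat.mod_eq_of_lt hk1
      have hlt : (p - 1 - ke) * p ^ e + p ^ e < p ^ (e+1) := by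
        calc (p - 1 - ke) * p ^ e + p ^ e = (p - 1 - ke + 1) * p ^ e := hmul2
        _ ≤ (p - 1) * p ^ e := hmul3
        _ < (p - 1) * p ^ e + p ^ e := Nat.lt_add_of_pos_right hpepos
        _ = p ^ (e+1) := hpe1
      have hmod : ((p - 1 - ke) * p ^ e + p ^ e) % p ^ (e+1) =
          (p - 1 - ke) * p ^ e + p ^ e := Nat.mod_eq_of_lt hlt
      rw [hkmod, hmod]
      omega
    · have hpee1 : p ^ e ≤ p ^ (e+1) := Nat.pow_le_pow_right hp.pos (by omega)
      omega

private lemma not_period (p a k : ℕ) (hp : p.Prime) (ha : 0 < a) (hk : 0 < k) :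
    ¬ (∀ j, k ≤ j → Nat.choose (j + p ^ (a + Nat.log p k - 1)) k ≡ Nat.choose j k [MOD p ^ a]) := by
  intro H
  have hpe : p ^ Nat.log p k ≤ k := Nat.pow_log_le_self p hk.ne'
  have hk1 : k < p ^ (Nat.log p k + 1) := Nat.lt_pow_succ_log_self hp.one_lt k
  obtain ⟨D, hsub, hsup, hbound⟩ := witnessD p a k (Nat.log p k) hp ha hpe hk1
  set e := Nat.log p k with he
  set P := p ^ (a + e - 1) with hP
  have hjk : k ≤ k + D := Nat.le_add_right _ _
  have hjP0 : k + D + P ≠ 0 := by positivity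
  have hlog2 : Nat.log p (k + D + P) < a + e + 2 := by
    have := Nat.log_lt_of_lt_pow hjP0 hbound
    omega
  have hlog1 : Nat.log p (k + D) < a + e + 2 := by
    have hmono : Nat.log p (k + D) ≤ Nat.log p (k + D + P) :=
      Nat.log_mono_right (Nat.le_add_right _ _)
    omega
  have hm1 := hp.emultiplicity_choose (n := k + D) (k := k) (b := a + e + 2) hjk hlog1
  have hm2 := hp.emultiplicity_choose (n := k + D + P) (k := k) (b := a + e + 2)
    (le_trans hjk (Nat.le_add_right _ _)) hlog2
  rw [show k + D - k = D from by omega] at hm1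
  rw [show k + D + P - k = D + P from by omega] at hm2
  have hdvd2 : p ^ a ∣ Nat.choose (k + D + P) k := by
    refine pow_dvd_of_le_emultiplicity ?_
    rw [hm2]
    have hcard : a ≤ #(Finset.filter (fun i => p ^ i ≤ k % p ^ i + (D + P) % p ^ i)
        (Finset.Ico 1 (a + e + 2))) := by
      have h1 := Finset.card_le_card hsup
      rw [Nat.card_Ico] at h1
      omega
    exact_mod_cast Nat.cast_le.2 hcard
  have hnd1 : ¬ p ^ a ∣ Nat.choose (k + D) k := by
    intro hd
    have h1 := le_emultiplicity_of_pow_dvd hd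
    rw [hm1] at h1
    have h2 : a ≤ #(Finset.filter (fun i => p ^ i ≤ k % p ^ i + D % p ^ i)
        (Finset.Ico 1 (a + e + 2))) := by exact_mod_cast h1
    have h3 := Finset.card_le_card hsub
    rw [Nat.card_Ico] at h3
    omega
  have hz : Nat.choose (k + D + P) k ≡ 0 [MOD p ^ a] := (Nat.modEq_zero_iff_dvd).2 hdvd2
  have hcontra : Nat.choose (k + D) k ≡ 0 [MOD p ^ a] := (H (k + D) hjk).symm.trans hz
  exact hnd1 ((Nat.modEq_zero_iff_dvd).1 hcontra)

private lemma per_add {n k P Q : ℕ}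
    (hP : ∀ j, k ≤ j → Nat.choose (j + P) k ≡ Nat.choose j k [MOD n])
    (hQ : ∀ j, k ≤ j → Nat.choose (j + Q) k ≡ Nat.choose j k [MOD n]) :
    ∀ j, k ≤ j → Nat.choose (j + (P + Q)) k ≡ Nat.choose j k [MOD n] := by
  intro j hj
  have h1 := hP (j + Q) (le_trans hj (Nat.le_add_right _ _))
  have h2 := hQ j hj
  rw [show j + (P + Q) = j + Q + P from by omega]
  exact h1.trans h2

private lemma per_mul {n k P : ℕ}
    (hP : ∀ j, k ≤ j → Nat.choose (j + P) k ≡ Nat.choose j k [MOD n]) (t : ℕ) :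
    ∀ j, k ≤ j → Nat.choose (j + t * P) k ≡ Nat.choose j k [MOD n] := by
  induction t with
  | zero => intro j hj; simp; rfl
  | succ t ih =>
    have := per_add ih hP
    intro j hj
    rw [show j + (t + 1) * P = j + (t * P + P) from by ring_nf]
    exact this j hj

private lemma per_sub {n k P Q : ℕ} (hQP : Q ≤ P)
    (hP : ∀ j, k ≤ j → Nat.choose (j + P) k ≡ Nat.choose j k [MOD n])
    (hQ : ∀ j, k ≤ j → Nat.choose (j + Q) k ≡ Nat.choose j k [MOD n]) :
    ∀ j, k ≤ j → Nat.choose (j + (P - Q)) k ≡ Nat.choose j k [MOD n] := by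
  intro j hj
  have h1 := hQ (j + (P - Q)) (le_trans hj (Nat.le_add_right _ _))
  rw [show j + (P - Q) + Q = j + P from by omega] at h1
  exact h1.symm.trans (hP j hj)

private lemma per_gcd {n k : ℕ} :
    ∀ P Q, (∀ j, k ≤ j → Nat.choose (j + P) k ≡ Nat.choose j k [MOD n]) →
    (∀ j, k ≤ j → Nat.choose (j + Q) k ≡ Nat.choose j k [MOD n]) →
    ∀ j, k ≤ j → Nat.choose (j + Nat.gcd P Q) k ≡ Nat.choose j k [MOD n] := by
  intro P
  induction P using Nat.strong_induction_on with
  | _ P ih =>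
    intro Q hP hQ
    rcases Nat.eq_zero_or_pos P with h0 | hpos
    · subst h0
      simpa [Nat.gcd_zero_left] using hQ
    · rw [Nat.gcd_rec]
      refine ih (Q % P) (Nat.mod_lt _ hpos) P ?_ hP
      have hle : Q / P * P ≤ Q := Nat.div_mul_le_self Q P
      have hper := per_sub hle hQ (per_mul hP (Q / P))
      have heq : Q % P = Q - Q / P * P := by
        have h1 := Nat.div_add_mod Q P
        have h2 := Nat.mul_comm P (Q / P)
        omega
      rwa [heq]

theorem stmt_3 (p a k : ℕ) (hp : p.Prime) (ha : 0 < a) (hk : 0 < k) :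
    (∀ j : ℕ, k ≤ j →
      Nat.choose (j + p ^ (a + Nat.log p k)) k ≡ Nat.choose j k [MOD p ^ a]) ∧
    (∀ P : ℕ, 0 < P →
      (∀ j : ℕ, k ≤ j → Nat.choose (j + P) k ≡ Nat.choose j k [MOD p ^ a]) →
      p ^ (a + Nat.log p k) ≤ P) := by
  constructor
  · intro j _
    exact part1 p a k hp ha hk j
  · intro P hPpos hper
    have hNper : ∀ j, k ≤ j → Nat.choose (j + p ^ (a + Nat.log p k)) k ≡ Nat.choose j k
        [MOD p ^ a] := fun j _ => part1 p a k hp ha hk j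
    have hg := per_gcd (p ^ (a + Nat.log p k)) P hNper hper
    obtain ⟨t, ht, hgeq⟩ :=
      (Nat.dvd_prime_pow hp).1 (Nat.gcd_dvd_left (p ^ (a + Nat.log p k)) P)
    by_cases hta : t = a + Nat.log p k
    · have hdvd : p ^ (a + Nat.log p k) ∣ P := by
        have := Nat.gcd_dvd_right (p ^ (a + Nat.log p k)) P
        rwa [hgeq, hta] at this
      exact Nat.le_of_dvd hPpos hdvd
    · exfalso
      apply not_period p a k hp ha hk
      have hg' : ∀ j, k ≤ j → Nat.choose (j + p ^ t) k ≡ Nat.choose j k [MOD p ^ a] := by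
        rw [← hgeq]; exact hg
      have hmulper := per_mul hg' (p ^ (a + Nat.log p k - 1 - t))
      have hpow : p ^ (a + Nat.log p k - 1 - t) * p ^ t = p ^ (a + Nat.log p k - 1) := by
        rw [← pow_add]; congr 1; omega
      rwa [hpow] at hmulper
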